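/- arXiv:1811.06871 — 4 statements merged into one kernel-verified Lean document; each statement's English description precedes it below -/
import Mathlib

section
/- Let x₁,…,xₙ be a sequence with values in a set of size ℓ that is non-crossing (for all i<j<k<l, we have xᵢ≠xₖ, or xⱼ≠xₗ, or all four of xᵢ,xⱼ,xₖ,xₗ are equal) and minimal (there is no index i with xᵢ = xᵢ₊₁ = xᵢ₊₂). Then n ≤ 4ℓ. -/
/-- A sequence with values in `Fin ℓ` is non-crossing if for all `i < j < k < l`,
`x i ≠ x k`, or `x j ≠ x l`, or all four values are equal. -/
def NonCrossing {n ℓ : ℕ} (x : Fin n → Fin ℓ) : Prop :=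
  ∀ i j k l : Fin n, i < j → j < k → k < l →
    x i ≠ x k ∨ x j ≠ x l ∨ (x i = x j ∧ x j = x k ∧ x k = x l)

/-- A sequence is minimal if no three consecutive entries are equal. -/
def MinimalSeq {n ℓ : ℕ} (x : Fin n → Fin ℓ) : Prop :=
  ∀ i j k : Fin n, (j : ℕ) = (i : ℕ) + 1 → (k : ℕ) = (i : ℕ) + 2 →
    ¬(x i = x j ∧ x j = x k)

theorem aux_bound (N ℓ : ℕ) (y : ℕ → Fin ℓ)
    (hnc : ∀ i j k l : ℕ, i < j → j < k → k < l → l < N →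
      y i ≠ y k ∨ y j ≠ y l ∨ (y i = y j ∧ y j = y k ∧ y k = y l))
    (hmin : ∀ i : ℕ, i + 2 < N → ¬(y i = y (i + 1) ∧ y (i + 1) = y (i + 2))) :
    N ≤ 4 * ℓ := by
  classical
  set occ : Fin ℓ → Finset ℕ := fun a => (Finset.range N).filter (fun i => y i = a) with hocc
  have hmemocc : ∀ (a : Fin ℓ) (p : ℕ), p ∈ occ a ↔ p < N ∧ y p = a := by
    intro a p; simp [hocc]
  set IsGS : ℕ → Prop := fun p =>
    ∃ q, p + 1 < q ∧ q < N ∧ y q = y p ∧ ∀ r, p < r → r < q → y r ≠ y p with hIsGS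
  set T : Finset ℕ := (Finset.range N).filter IsGS with hT
  set GS : Fin ℓ → Finset ℕ := fun a => (occ a).filter IsGS with hGS
  -- total count
  have hsum : N = ∑ a : Fin ℓ, (occ a).card := by
    have := Finset.card_eq_sum_card_fiberwise
      (s := Finset.range N) (t := (Finset.univ : Finset (Fin ℓ))) (f := y)
      (fun x _ => Finset.mem_univ _)
    simpa [hocc] using this
  -- gap starts inject into the alphabet
  have key : ∀ p ∈ T, ∀ p' ∈ T, p < p' → y (p + 1) ≠ y (p' + 1) := by
    intro p hp p' hp' hlt heq
    obtain ⟨q', hq1, hq2, hq3, hq4⟩ := (Finset.mem_filter.mp hp').2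
    have hb : y (p' + 1) ≠ y p' := hq4 (p' + 1) (by omega) hq1
    have hne : p + 1 ≠ p' := by
      intro h
      apply hb
      rw [← heq, h]
    have hlt2 : p + 1 < p' := by omega
    rcases hnc (p + 1) p' (p' + 1) q' hlt2 (by omega) hq1 hq2 with h1 | h2 | h3
    · exact h1 heq
    · exact h2 hq3.symm
    · exact hb (heq ▸ h3.1.symm ▸ rfl)
  have hTcard : T.card ≤ ℓ := by
    have h1 : T.card ≤ (Finset.univ : Finset (Fin ℓ)).card := by
      apply Finset.card_le_card_of_injOn (fun p => y (p + 1)) (fun _ _ => Finset.mem_univ _)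
      intro p hp p' hp' heq
      by_contra hne
      rcases lt_or_gt_of_ne hne with h | h
      · exact key p hp p' hp' h heq
      · exact key p' hp' p hp h heq.symm
    simpa using h1
  have hTsum : ∑ a : Fin ℓ, (GS a).card = T.card := by
    rw [Finset.card_eq_sum_card_fiberwise
      (s := T) (t := (Finset.univ : Finset (Fin ℓ))) (f := y)
      (fun x _ => Finset.mem_univ _)]
    apply Finset.sum_congr rfl
    intro a _
    congr 1
    ext p
    simp only [hGS, hT, hocc, Finset.mem_filter, Finset.mem_range]
    tauto
  -- next occurrence helper
  have nextOcc : ∀ (a : Fin ℓ) (p m : ℕ), p ∈ occ a → m ∈ occ a → p < m →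
      ∃ q, q ∈ occ a ∧ p < q ∧ ∀ r, p < r → r < q → y r ≠ a := by
    intro a p m hp hm hpm
    set S := (occ a).filter (fun r => p < r) with hS
    have hne : S.Nonempty := ⟨m, Finset.mem_filter.mpr ⟨hm, hpm⟩⟩
    obtain ⟨hq1, hq2⟩ := Finset.mem_filter.mp (S.min'_mem hne)
    refine ⟨S.min' hne, hq1, hq2, ?_⟩
    intro r hpr hrq hya
    have hqN : S.min' hne < N := ((hmemocc a _).mp hq1).1
    have hrS : r ∈ S := Finset.mem_filter.mpr ⟨(hmemocc a r).mpr ⟨by omega, hya⟩, hpr⟩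
    have := S.min'_le r hrS
    omega
  -- per-symbol bound
  have hper : ∀ a : Fin ℓ, (occ a).card ≤ 2 * (GS a).card + 2 := by
    intro a
    rcases (occ a).eq_empty_or_nonempty with h0 | hne
    · simp [h0]
    set m := (occ a).max' hne with hm
    have hmmem : m ∈ occ a := (occ a).max'_mem hne
    set Adj : Finset ℕ := (occ a).filter (fun p => p + 1 < N ∧ y (p + 1) = a) with hAdj
    have hsub : occ a ⊆ insert m (GS a ∪ Adj) := by
      intro p hp
      by_cases hpm : p = m
      · simp [hpm]
      · have hplt : p < m := lt_of_le_of_ne ((occ a).le_max' p hp) hpm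
        obtain ⟨q, hq, hpq, hmin'⟩ := nextOcc a p m hp hmmem hplt
        obtain ⟨hqN, hqa⟩ := (hmemocc a q).mp hq
        rcases eq_or_lt_of_le (Nat.succ_le_of_lt hpq) with he | hl
        · refine Finset.mem_insert.mpr (Or.inr (Finset.mem_union.mpr (Or.inr ?_)))
          refine Finset.mem_filter.mpr ⟨hp, by omega, ?_⟩
          rw [show p + 1 = q from by omega]
          exact hqa
        · refine Finset.mem_insert.mpr (Or.inr (Finset.mem_union.mpr (Or.inl ?_)))
          refine Finset.mem_filter.mpr ⟨hp, q, hl, hqN, ?_, ?_⟩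
          · rw [hqa, ((hmemocc a p).mp hp).2]
          · intro r h1 h2
            rw [((hmemocc a p).mp hp).2]
            exact hmin' r h1 h2
    have hAdjcard : Adj.card ≤ (GS a).card + 1 := by
      have h2 : Adj.card ≤ (insert m (GS a)).card := by
        apply Finset.card_le_card_of_injOn (fun p => p + 1)
        · intro p hp
          obtain ⟨hpo, hpN1, hyp1⟩ := Finset.mem_filter.mp hp
          have hp1 : p + 1 ∈ occ a := (hmemocc a _).mpr ⟨hpN1, hyp1⟩
          by_cases h1 : p + 1 = m
          · simp [h1]
          · have hlt : p + 1 < m := lt_of_le_of_ne ((occ a).le_max' _ hp1) h1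
            obtain ⟨q, hq, hpq, hmin'⟩ := nextOcc a (p + 1) m hp1 hmmem hlt
            obtain ⟨hqN, hqa⟩ := (hmemocc a q).mp hq
            have hq2 : p + 2 < q := by
              rcases eq_or_lt_of_le (Nat.succ_le_of_lt hpq) with he | hl
              · exfalso
                apply hmin p (by omega)
                constructor
                · rw [((hmemocc a p).mp hpo).2, hyp1]
                · rw [hyp1, show p + 2 = q from by omega]
                  exact hqa.symm
              · exact hl
            refine Finset.mem_insert.mpr (Or.inr ?_)
            refine Finset.mem_filter.mpr ⟨hp1, q, by omega, hqN, ?_, ?_⟩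
            · rw [hqa, hyp1]
            · intro r hr1 hr2
              rw [hyp1]
              exact hmin' r hr1 hr2
        · intro p _ p' _ h
          exact Nat.succ_injective h
      have h3 := Finset.card_insert_le m (GS a)
      omega
    have h4 : (occ a).card ≤ (insert m (GS a ∪ Adj)).card := Finset.card_le_card hsub
    have h5 := Finset.card_insert_le m (GS a ∪ Adj)
    have h6 := Finset.card_union_le (GS a) Adj
    omega
  -- combine
  have hfin : ∑ a : Fin ℓ, (occ a).card ≤ ∑ a : Fin ℓ, (2 * (GS a).card + 2) :=
    Finset.sum_le_sum (fun a _ => hper a)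
  have heq2 : ∑ a : Fin ℓ, (2 * (GS a).card + 2) = 2 * T.card + 2 * ℓ := by
    rw [Finset.sum_add_distrib, ← Finset.mul_sum, hTsum]
    simp [Finset.card_univ, mul_comm]
  calc N = ∑ a : Fin ℓ, (occ a).card := hsum
    _ ≤ ∑ a : Fin ℓ, (2 * (GS a).card + 2) := hfin
    _ = 2 * T.card + 2 * ℓ := heq2
    _ ≤ 2 * ℓ + 2 * ℓ := by omega
    _ = 4 * ℓ := by ring

theorem minimal_noncrossing_length_le {n ℓ : ℕ} (x : Fin n → Fin ℓ)
    (hnc : NonCrossing x) (hmin : MinimalSeq x) : n ≤ 4 * ℓ := by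
  rcases Nat.eq_zero_or_pos n with h0 | hn
  · omega
  set y : ℕ → Fin ℓ := fun i => x ⟨min i (n - 1), by omega⟩ with hy
  have hyx : ∀ (i : ℕ) (h : i < n), y i = x ⟨i, h⟩ := by
    intro i h
    simp only [hy]
    congr 1
    exact Fin.ext (by simp; omega)
  apply aux_bound n ℓ y
  · intro i j k l hij hjk hkl hlN
    have hiN : i < n := by omega
    have hjN : j < n := by omega
    have hkN : k < n := by omega
    rw [hyx i hiN, hyx j hjN, hyx k hkN, hyx l hlN]
    exact hnc ⟨i, hiN⟩ ⟨j, hjN⟩ ⟨k, hkN⟩ ⟨l, hlN⟩ hij hjk hkl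
  · intro i hi
    have h1 : i < n := by omega
    have h2 : i + 1 < n := by omega
    rw [hyx i h1, hyx (i + 1) h2, hyx (i + 2) hi]
    exact hmin ⟨i, h1⟩ ⟨i + 1, h2⟩ ⟨i + 2, hi⟩ rfl rfl
end

section
/- Let V be a finite vertex set, let S₁, S₂ be two edge sets on V, and let X ⊆ V be such that every vertex incident both to an edge of S₁ and to an edge of S₂ belongs to X. For i ∈ {1,2} let πᵢ be the partition of X where two vertices of X are in the same block iff they are connected in (V, Sᵢ). Then two vertices of X are connected in (V, S₁ ∪ S₂) if and only if they are in the same block of the join π₁ ⊔ π₂ in the partition lattice of X. -/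
lemma exists_adj_of_walk {V : Type*} {G : SimpleGraph V} {x a : V}
    (p : G.Walk x a) (hne : x ≠ a) : ∃ w, G.Adj w a := by
  induction p with
  | nil => exact absurd rfl hne
  | @cons x c a h q ih =>
    by_cases hc : c = a
    · subst hc; exact ⟨x, h⟩
    · exact ih hc

/-- The partition (setoid) on `X` where two vertices are in the same block iff they
are connected in the spanning subgraph `(V, S)`. -/
def reachSetoid {V : Type*} (S : Set (Sym2 V)) (X : Set V) : Setoid X where
  r a b := (SimpleGraph.fromEdgeSet S).Reachable a b
  iseqv := ⟨fun _ => SimpleGraph.Reachable.refl _,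
    fun h => h.symm, fun h h' => h.trans h'⟩

lemma reach_key {V : Type*} (S₁ S₂ : Set (Sym2 V)) (X : Set V)
    (hX : ∀ v : V, (∃ e ∈ S₁, v ∈ e) → (∃ e ∈ S₂, v ∈ e) → v ∈ X) :
    ∀ {a b : V} (_ : (SimpleGraph.fromEdgeSet (S₁ ∪ S₂)).Walk a b) (hb : b ∈ X) (x : X),
      ((SimpleGraph.fromEdgeSet S₁).Reachable ↑x a →
        (reachSetoid S₁ X ⊔ reachSetoid S₂ X).r x ⟨b, hb⟩) ∧
      ((SimpleGraph.fromEdgeSet S₂).Reachable ↑x a →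
        (reachSetoid S₁ X ⊔ reachSetoid S₂ X).r x ⟨b, hb⟩) := by
  intro a b p
  induction p with
  | nil =>
    intro hb x
    constructor
    · intro h1
      exact (le_sup_left : reachSetoid S₁ X ≤ _) h1
    · intro h2
      exact (le_sup_right : reachSetoid S₂ X ≤ _) h2
  | @cons a c b h q ih =>
    intro hb x
    rw [SimpleGraph.fromEdgeSet_adj] at h
    obtain ⟨hmem, hne⟩ := h
    constructor
    · intro hx1
      rcases hmem with h1 | h2
      · exact (ih hb x).1 (hx1.trans ((SimpleGraph.fromEdgeSet_adj _).2 ⟨h1, hne⟩).reachable)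
      · by_cases hxa : (x : V) = a
        · refine (ih hb x).2 ?_
          rw [hxa]
          exact ((SimpleGraph.fromEdgeSet_adj _).2 ⟨h2, hne⟩).reachable
        · obtain ⟨w, hw⟩ := hx1.elim fun p1 => exists_adj_of_walk p1 hxa
          rw [SimpleGraph.fromEdgeSet_adj] at hw
          have ha : a ∈ X := hX a ⟨s(w, a), hw.1, Sym2.mem_mk_right _ _⟩
            ⟨s(a, c), h2, Sym2.mem_mk_left _ _⟩
          have r1 : (reachSetoid S₁ X ⊔ reachSetoid S₂ X).r x ⟨a, ha⟩ :=
            (le_sup_left : reachSetoid S₁ X ≤ _) hx1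
          exact (reachSetoid S₁ X ⊔ reachSetoid S₂ X).trans' r1
            ((ih hb ⟨a, ha⟩).2 ((SimpleGraph.fromEdgeSet_adj _).2 ⟨h2, hne⟩).reachable)
    · intro hx2
      rcases hmem with h1 | h2
      · by_cases hxa : (x : V) = a
        · refine (ih hb x).1 ?_
          rw [hxa]
          exact ((SimpleGraph.fromEdgeSet_adj _).2 ⟨h1, hne⟩).reachable
        · obtain ⟨w, hw⟩ := hx2.elim fun p1 => exists_adj_of_walk p1 hxa
          rw [SimpleGraph.fromEdgeSet_adj] at hw
          have ha : a ∈ X := hX a ⟨s(a, c), h1, Sym2.mem_mk_left _ _⟩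
            ⟨s(w, a), hw.1, Sym2.mem_mk_right _ _⟩
          have r2 : (reachSetoid S₁ X ⊔ reachSetoid S₂ X).r x ⟨a, ha⟩ :=
            (le_sup_right : reachSetoid S₂ X ≤ _) hx2
          exact (reachSetoid S₁ X ⊔ reachSetoid S₂ X).trans' r2
            ((ih hb ⟨a, ha⟩).1 ((SimpleGraph.fromEdgeSet_adj _).2 ⟨h1, hne⟩).reachable)
      · exact (ih hb x).2 (hx2.trans ((SimpleGraph.fromEdgeSet_adj _).2 ⟨h2, hne⟩).reachable)

/-- If every vertex incident to both an edge of `S₁` and an edge of `S₂` lies in `X`,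
then two vertices of `X` are connected in `(V, S₁ ∪ S₂)` iff they are in the same
block of the join of the connectivity partitions of `S₁` and `S₂` on `X`. -/
theorem reachable_union_iff_join {V : Type*} [Fintype V]
    (S₁ S₂ : Set (Sym2 V)) (X : Set V)
    (hX : ∀ v : V, (∃ e ∈ S₁, v ∈ e) → (∃ e ∈ S₂, v ∈ e) → v ∈ X) :
    ∀ u v : X, (SimpleGraph.fromEdgeSet (S₁ ∪ S₂)).Reachable u v ↔
      (reachSetoid S₁ X ⊔ reachSetoid S₂ X).r u v := by
  intro u v
  constructor
  · intro h
    obtain ⟨p⟩ := h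
    exact (reach_key S₁ S₂ X hX p v.2 u).1 (SimpleGraph.Reachable.refl _)
  · intro h
    have h1 : reachSetoid S₁ X ≤ reachSetoid (S₁ ∪ S₂) X := by
      rw [Setoid.le_def]
      exact fun hr => hr.mono (SimpleGraph.fromEdgeSet_mono Set.subset_union_left)
    have h2 : reachSetoid S₂ X ≤ reachSetoid (S₁ ∪ S₂) X := by
      rw [Setoid.le_def]
      exact fun hr => hr.mono (SimpleGraph.fromEdgeSet_mono Set.subset_union_right)
    exact (sup_le h1 h2) h
end

section
/- Let V be a finite vertex set and S₁, S₂ edge sets on V with all common incidences contained in X ⊆ V (every vertex incident to edges of both S₁ and S₂ lies in X). Suppose for i ∈ {1,2} that every vertex of a set Tᵢ ⊆ V is connected in (V,Sᵢ) to some vertex of Bᵢ ∪ X, where Bᵢ ⊆ V. Let π' be the join of the connectivity partitions of S₁ on B₁ ∪ X and of S₂ on B₂ ∪ X, and suppose every x ∈ X is in the same block of π' as some vertex of B := B₁ ∪ B₂. Then every vertex of T₁ ∪ T₂ ∪ X is connected in (V, S₁ ∪ S₂) to some vertex of B. -/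
/-- If all common incidences of `S₁` and `S₂` are in `X`, every terminal of `Tᵢ` is
connected in `(V, Sᵢ)` to `Bᵢ ∪ X`, and every vertex of `X` is in the same block as
some vertex of `B = B₁ ∪ B₂` in the join of the connectivity partitions of `S₁` on
`B₁ ∪ X` and `S₂` on `B₂ ∪ X`, then every vertex of `T₁ ∪ T₂ ∪ X` is connected in
`(V, S₁ ∪ S₂)` to some vertex of `B`. -/
theorem terminals_connected_to_boundary {V : Type*} [Fintype V]
    (S₁ S₂ : Set (Sym2 V)) (X B₁ B₂ T₁ T₂ : Set V)
    (hX : ∀ v : V, (∃ e ∈ S₁, v ∈ e) → (∃ e ∈ S₂, v ∈ e) → v ∈ X)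
    (hT₁ : ∀ t ∈ T₁, ∃ b ∈ B₁ ∪ X, (SimpleGraph.fromEdgeSet S₁).Reachable t b)
    (hT₂ : ∀ t ∈ T₂, ∃ b ∈ B₂ ∪ X, (SimpleGraph.fromEdgeSet S₂).Reachable t b)
    (hXB : ∀ x ∈ X, ∃ b ∈ B₁ ∪ B₂,
      Relation.EqvGen (fun a c : V =>
        (a ∈ B₁ ∪ X ∧ c ∈ B₁ ∪ X ∧ (SimpleGraph.fromEdgeSet S₁).Reachable a c) ∨
        (a ∈ B₂ ∪ X ∧ c ∈ B₂ ∪ X ∧ (SimpleGraph.fromEdgeSet S₂).Reachable a c)) x b) :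
    ∀ t ∈ T₁ ∪ T₂ ∪ X, ∃ b ∈ B₁ ∪ B₂,
      (SimpleGraph.fromEdgeSet (S₁ ∪ S₂)).Reachable t b := by
  have hmono1 : ∀ a c : V, (SimpleGraph.fromEdgeSet S₁).Reachable a c →
      (SimpleGraph.fromEdgeSet (S₁ ∪ S₂)).Reachable a c := fun a c h =>
    h.mono (SimpleGraph.fromEdgeSet_mono Set.subset_union_left)
  have hmono2 : ∀ a c : V, (SimpleGraph.fromEdgeSet S₂).Reachable a c →
      (SimpleGraph.fromEdgeSet (S₁ ∪ S₂)).Reachable a c := fun a c h =>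
    h.mono (SimpleGraph.fromEdgeSet_mono Set.subset_union_right)
  have key : ∀ a c : V, Relation.EqvGen (fun a c : V =>
        (a ∈ B₁ ∪ X ∧ c ∈ B₁ ∪ X ∧ (SimpleGraph.fromEdgeSet S₁).Reachable a c) ∨
        (a ∈ B₂ ∪ X ∧ c ∈ B₂ ∪ X ∧ (SimpleGraph.fromEdgeSet S₂).Reachable a c)) a c →
      (SimpleGraph.fromEdgeSet (S₁ ∪ S₂)).Reachable a c := by
    intro a c h
    induction h with
    | rel x y hxy =>
      rcases hxy with ⟨_, _, h⟩ | ⟨_, _, h⟩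
      · exact hmono1 _ _ h
      · exact hmono2 _ _ h
    | refl x => exact SimpleGraph.Reachable.refl x
    | symm x y _ ih => exact ih.symm
    | trans x y z _ _ ih1 ih2 => exact ih1.trans ih2
  have hXcase : ∀ x ∈ X, ∃ b ∈ B₁ ∪ B₂,
      (SimpleGraph.fromEdgeSet (S₁ ∪ S₂)).Reachable x b := by
    intro x hx
    obtain ⟨b, hb, h⟩ := hXB x hx
    exact ⟨b, hb, key _ _ h⟩
  intro t ht
  rcases ht with (ht | ht) | ht
  · obtain ⟨b, hb, h⟩ := hT₁ t ht
    rcases hb with hb | hb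
    · exact ⟨b, Or.inl hb, hmono1 _ _ h⟩
    · obtain ⟨b', hb', h'⟩ := hXcase b hb
      exact ⟨b', hb', (hmono1 _ _ h).trans h'⟩
  · obtain ⟨b, hb, h⟩ := hT₂ t ht
    rcases hb with hb | hb
    · exact ⟨b, Or.inr hb, hmono2 _ _ h⟩
    · obtain ⟨b', hb', h'⟩ := hXcase b hb
      exact ⟨b', hb', (hmono2 _ _ h).trans h'⟩
  · exact hXcase t ht
end

section
/- Suppose a function T : ℕ × ℕ → ℝ≥1 satisfies: T(n,p) ≤ n^c for all p ≤ c₀, and T(n,p) ≤ n^(c·√p) · 2^(c·p) · T(n, ⌈(3/4)·p⌉) for all p > c₀, where c ≥ 1 and c₀ ≥ 4 are constants and n ≥ 2. Then there exist constants c₁, c₂ (depending only on c and c₀) such that T(n,p) ≤ 2^(c₁·p) · n^(c₂·√p) for all n ≥ 2 and p ≥ 1. -/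
/-- A recurrence of the form `T(n,p) ≤ n^(c√p) · 2^(cp) · T(n, ⌈(3/4)p⌉)` with
polynomial base case solves to `T(n,p) ≤ 2^(c₁ p) · n^(c₂ √p)`. -/
theorem recurrence_solution (T : ℕ → ℕ → ℝ) (c : ℝ) (c₀ : ℕ)
    (hc : 1 ≤ c) (hc₀ : 4 ≤ c₀)
    (hT1 : ∀ n p : ℕ, 1 ≤ T n p)
    (hbase : ∀ n p : ℕ, 2 ≤ n → p ≤ c₀ → T n p ≤ (n : ℝ) ^ c)
    (hrec : ∀ n p : ℕ, 2 ≤ n → c₀ < p →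
      T n p ≤ (n : ℝ) ^ (c * Real.sqrt p) * 2 ^ (c * p) *
        T n ⌈(3 / 4 : ℝ) * p⌉₊) :
    ∃ c₁ c₂ : ℝ, ∀ n p : ℕ, 2 ≤ n → 1 ≤ p →
      T n p ≤ 2 ^ (c₁ * p) * (n : ℝ) ^ (c₂ * Real.sqrt p) := by
  set r := Real.sqrt (7 / 8) with hr_def
  have hr0 : 0 ≤ r := Real.sqrt_nonneg _
  have hr1 : r < 1 := by
    rw [hr_def, show (1 : ℝ) = Real.sqrt 1 by simp]
    exact Real.sqrt_lt_sqrt (by norm_num) (by norm_num)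
  have hc0 : (0 : ℝ) < c := lt_of_lt_of_le one_pos hc
  set c₂ := c / (1 - r) with hc₂def
  have hc₂pos : 0 < c₂ := div_pos hc0 (by linarith)
  have hc₂eq : c₂ * (1 - r) = c := by
    rw [hc₂def, div_mul_cancel₀]; linarith
  have hc2 : c ≤ c₂ := by
    nlinarith [mul_nonneg hc₂pos.le hr0]
  refine ⟨8 * c, c₂, fun n p hn => ?_⟩
  have hn2 : (2 : ℝ) ≤ (n : ℝ) := by exact_mod_cast hn
  have hn1 : (1 : ℝ) ≤ (n : ℝ) := by linarith
  have hn0 : (0 : ℝ) < (n : ℝ) := by linarith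
  induction p using Nat.strong_induction_on with
  | _ p IH =>
  intro hp
  have hsp : (1 : ℝ) ≤ Real.sqrt p := by
    rw [show (1 : ℝ) = Real.sqrt 1 by simp]
    exact Real.sqrt_le_sqrt (by exact_mod_cast hp)
  have hsp0 : (0 : ℝ) ≤ Real.sqrt p := by linarith
  by_cases hpc : p ≤ c₀
  · calc T n p ≤ (n : ℝ) ^ c := hbase n p hn hpc
      _ ≤ 1 * (n : ℝ) ^ (c₂ * Real.sqrt p) := by
          rw [one_mul]
          apply Real.rpow_le_rpow_of_exponent_le hn1
          nlinarith
      _ ≤ 2 ^ (8 * c * p) * (n : ℝ) ^ (c₂ * Real.sqrt p) := by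
          gcongr
          apply Real.one_le_rpow (by norm_num)
          positivity
  · push_neg at hpc
    have hp5 : 5 ≤ p := by omega
    set q := ⌈(3 / 4 : ℝ) * p⌉₊ with hq_def
    have hq_le : q ≤ (3 * p + 3) / 4 := by
      rw [hq_def]
      apply Nat.ceil_le.mpr
      have h4 : 3 * p ≤ 4 * ((3 * p + 3) / 4) := by omega
      have h4' : (3 : ℝ) * p ≤ 4 * (((3 * p + 3) / 4 : ℕ) : ℝ) := by exact_mod_cast h4
      linarith
    have h87' : (q : ℝ) ≤ 7 / 8 * p := by
      rcases eq_or_lt_of_le hp5 with h5 | h6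
      · have hq4 : q = 4 := by
          rw [hq_def, ← h5]
          rw [Nat.ceil_eq_iff (by norm_num)] <;> norm_num
        rw [hq4, ← h5]; norm_num
      · have hle : (((3 * p + 3) / 4 : ℕ) : ℝ) ≤ ((3 * p + 3 : ℕ) : ℝ) / 4 := by
          exact_mod_cast Nat.cast_div_le
        have h6' : (6 : ℝ) ≤ p := by exact_mod_cast h6
        have hqr : (q : ℝ) ≤ (((3 * p + 3) / 4 : ℕ) : ℝ) := by exact_mod_cast hq_le
        push_cast at hle
        linarith
    have hqp : q < p := by
      have hpR : (5 : ℝ) ≤ (p : ℝ) := by exact_mod_cast hp5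
      have : (q : ℝ) < p := by linarith
      exact_mod_cast this
    have hq1 : 1 ≤ q := by
      rw [hq_def, Nat.one_le_ceil_iff]
      positivity
    have hsq : Real.sqrt q ≤ r * Real.sqrt p := by
      rw [hr_def, ← Real.sqrt_mul (by norm_num)]
      exact Real.sqrt_le_sqrt h87'
    have hsq0 : (0 : ℝ) ≤ Real.sqrt q := Real.sqrt_nonneg _
    have hIH := IH q hqp hq1
    calc T n p ≤ (n : ℝ) ^ (c * Real.sqrt p) * 2 ^ (c * p) * T n q := hrec n p hn hpc
      _ ≤ (n : ℝ) ^ (c * Real.sqrt p) * 2 ^ (c * p) *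
            (2 ^ (8 * c * q) * (n : ℝ) ^ (c₂ * Real.sqrt q)) := by
          gcongr
      _ = 2 ^ (c * p + 8 * c * q) * (n : ℝ) ^ (c * Real.sqrt p + c₂ * Real.sqrt q) := by
          rw [Real.rpow_add hn0, Real.rpow_add (by norm_num : (0 : ℝ) < 2)]
          ring
      _ ≤ 2 ^ (8 * c * p) * (n : ℝ) ^ (c₂ * Real.sqrt p) := by
          have hpR : (0 : ℝ) ≤ (p : ℝ) := by positivity
          apply mul_le_mul
          · apply Real.rpow_le_rpow_of_exponent_le one_le_two
            nlinarith
          · apply Real.rpow_le_rpow_of_exponent_le hn1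
            nlinarith [mul_nonneg hc₂pos.le (sub_nonneg.mpr hsq)]
          · positivity
          · positivity
end
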